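/- Assume λ > 0 and that K_p is symmetric positive semidefinite, so that (1/n_p) K_p + λ I is invertible. Then the coefficients β* = (1/(λ n_q)) 𝟙 and α* = −(1/(λ n_p n_q)) ((1/n_p) K_p + λ I)⁻¹ K_{pq} 𝟙 satisfy the two stationarity equations of L: ((1/n_p) K_p K_{pq} + λ K_{pq}) β* + K_p ((1/n_p) K_p + λ I) α* = (1/n_q) K_{pq} 𝟙 and ((1/n_p) K_{pq}ᵀ K_{pq} + λ K_q) β* + K_{pq}ᵀ ((1/n_p) K_p + λ I) α* = (1/n_q) K_q 𝟙. -/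

import Mathlib

open Matrix

/-- Assume `λ > 0` and that `K_p` is symmetric positive
semidefinite, so that `(1/n_p) K_p + λ I` is invertible.  Then
`β* = (1/(λ n_q)) 𝟙` and `α* = −(1/(λ n_p n_q)) ((1/n_p) K_p + λ I)⁻¹ K_{pq} 𝟙`
satisfy the two stationarity equations of `L`:
`((1/n_p) K_p K_{pq} + λ K_{pq}) β* + K_p ((1/n_p) K_p + λ I) α* = (1/n_q) K_{pq} 𝟙`
and
`((1/n_p) K_{pq}ᵀ K_{pq} + λ K_q) β* + K_{pq}ᵀ ((1/n_p) K_p + λ I) α* = (1/n_q) K_q 𝟙`. -/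
theorem stmt_3
    (np nq : ℕ) (hnp : 1 ≤ np) (hnq : 1 ≤ nq)
    (Kp : Matrix (Fin np) (Fin np) ℝ)
    (Kq : Matrix (Fin nq) (Fin nq) ℝ)
    (Kpq : Matrix (Fin np) (Fin nq) ℝ)
    (lam : ℝ) (hlam : 0 < lam)
    (hKp : Kp.PosSemidef)
    (βs : Fin nq → ℝ)
    (hβ : βs = (1 / (lam * (nq : ℝ))) • (1 : Fin nq → ℝ))
    (αs : Fin np → ℝ)
    (hα : αs = -((1 / (lam * (np : ℝ) * (nq : ℝ))) •
      (((1 / (np : ℝ)) • Kp + lam • (1 : Matrix (Fin np) (Fin np) ℝ))⁻¹ *ᵥ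
        (Kpq *ᵥ (1 : Fin nq → ℝ))))) :
    IsUnit ((1 / (np : ℝ)) • Kp + lam • (1 : Matrix (Fin np) (Fin np) ℝ)).det ∧
    ((1 / (np : ℝ)) • (Kp * Kpq) + lam • Kpq) *ᵥ βs
        + (Kp * ((1 / (np : ℝ)) • Kp + lam • (1 : Matrix (Fin np) (Fin np) ℝ))) *ᵥ αs
      = (1 / (nq : ℝ)) • (Kpq *ᵥ (1 : Fin nq → ℝ)) ∧
    ((1 / (np : ℝ)) • (Kpqᵀ * Kpq) + lam • Kq) *ᵥ βs
        + (Kpqᵀ * ((1 / (np : ℝ)) • Kp + lam • (1 : Matrix (Fin np) (Fin np) ℝ))) *ᵥ αs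
      = (1 / (nq : ℝ)) • (Kq *ᵥ (1 : Fin nq → ℝ)) := by
  have hnp' : (0:ℝ) < np := by exact_mod_cast hnp
  have hnq' : (0:ℝ) < nq := by exact_mod_cast hnq
  set M : Matrix (Fin np) (Fin np) ℝ :=
    (1 / (np : ℝ)) • Kp + lam • (1 : Matrix (Fin np) (Fin np) ℝ) with hM
  have hsmul : ((1 / (np : ℝ)) • Kp).PosSemidef := by
    constructor
    · show _ᴴ = _
      have ht : Kpᵀ = Kp := (by simpa using hKp.1 : Kp.IsSymm).eq
      simp [conjTranspose_smul, ht]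
    · intro x
      have := hKp.2 x
      simp only [Matrix.smul_apply, smul_eq_mul]
      have e : ∀ i j (a b : ℝ), star a * (1 / (np:ℝ) * Kp i j) * b
          = 1 / (np:ℝ) * (star a * Kp i j * b) := by intros; ring
      simp only [e, ← Finsupp.mul_sum]
      exact mul_nonneg (by positivity) this
  have hdiag : (lam • (1 : Matrix (Fin np) (Fin np) ℝ)).PosDef := by
    rw [smul_one_eq_diagonal]
    exact Matrix.PosDef.diagonal (by intro i; simpa using hlam)
  have hMposdef : M.PosDef := Matrix.PosDef.posSemidef_add hsmul hdiag
  have hdet : IsUnit M.det := hMposdef.det_pos.ne'.isUnit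
  refine ⟨hdet, ?_, ?_⟩
  · have hMinv : M * M⁻¹ = 1 := Matrix.mul_nonsing_inv _ hdet
    have hv : M *ᵥ (M⁻¹ *ᵥ (Kpq *ᵥ (1 : Fin nq → ℝ))) = Kpq *ᵥ (1 : Fin nq → ℝ) := by
      rw [mulVec_mulVec, hMinv, one_mulVec]
    subst hβ hα
    simp only [add_mulVec, smul_mulVec, mulVec_neg, mulVec_smul, ← mulVec_mulVec, hv,
      one_mulVec]
    match_scalars <;> (field_simp; try ring)
  · have hMinv : M * M⁻¹ = 1 := Matrix.mul_nonsing_inv _ hdet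
    have hv : M *ᵥ (M⁻¹ *ᵥ (Kpq *ᵥ (1 : Fin nq → ℝ))) = Kpq *ᵥ (1 : Fin nq → ℝ) := by
      rw [mulVec_mulVec, hMinv, one_mulVec]
    subst hβ hα
    simp only [add_mulVec, smul_mulVec, mulVec_neg, mulVec_smul, ← mulVec_mulVec, hv,
      one_mulVec]
    match_scalars <;> (field_simp; try ring)
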